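/- arXiv:2209.15429 — 5 statements merged into one kernel-verified Lean document; each statement's English description precedes it below -/
import Mathlib

section
/- For all z in [1/2, 1), the function g(z) = 2z - 1 - 2(1 - 3z + 3z²)·log(z/(1-z)) is nonpositive. -/
lemma g_key (z : ℝ) (hz : 1/2 ≤ z) (hz1 : z < 1) :
    4*z - 2 ≤ Real.log z - Real.log (1-z) := by
  set f : ℝ → ℝ := fun x => Real.log x - Real.log (1-x) - (4*x-2) with hf
  have hderiv : ∀ x ∈ Set.Ioo (1/2:ℝ) 1,
      HasDerivAt f (1/x + 1/(1-x) - 4) x := by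
    intro x hx
    have hx0 : x ≠ 0 := by nlinarith [hx.1]
    have hx1 : (1:ℝ) - x ≠ 0 := by nlinarith [hx.2]
    have h1 : HasDerivAt (fun y : ℝ => 1 - y) (-1) x := by
      simpa using (hasDerivAt_id x).const_sub 1
    have h2 : HasDerivAt (fun y : ℝ => Real.log (1 - y)) ((1-x)⁻¹ * (-1)) x :=
      (Real.hasDerivAt_log hx1).comp x h1
    have h3 : HasDerivAt (fun y : ℝ => 4*y - 2) 4 x := by
      simpa using ((hasDerivAt_id x).const_mul 4).sub_const 2
    have := ((Real.hasDerivAt_log hx0).sub h2).sub h3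
    exact this.congr_deriv (by ring)
  have hmono : MonotoneOn f (Set.Ico (1/2:ℝ) 1) := by
    apply monotoneOn_of_deriv_nonneg (convex_Ico _ _)
    · apply ContinuousOn.sub
      apply ContinuousOn.sub
      · exact Real.continuousOn_log.comp continuousOn_id (fun x hx => by
          simp only [Set.mem_compl_iff, Set.mem_singleton_iff, id]
          nlinarith [hx.1])
      · exact Real.continuousOn_log.comp (by fun_prop) (fun x hx => by
          simp only [Set.mem_compl_iff, Set.mem_singleton_iff]
          nlinarith [hx.2])
      · fun_prop
    · intro x hx
      rw [interior_Ico] at hx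
      exact (hderiv x hx).differentiableAt.differentiableWithinAt
    · intro x hx
      rw [interior_Ico] at hx
      rw [(hderiv x hx).deriv]
      have hx0 : (0:ℝ) < x := by nlinarith [hx.1]
      have hx1 : (0:ℝ) < 1 - x := by nlinarith [hx.2]
      have : 1/x + 1/(1-x) - 4 = (2*x-1)^2/(x*(1-x)) := by field_simp; ring
      rw [this]; positivity
  have h0 : f (1/2) = 0 := by
    simp only [hf]
    norm_num
  have hmem : z ∈ Set.Ico (1/2:ℝ) 1 := ⟨hz, hz1⟩
  have hmem0 : (1/2:ℝ) ∈ Set.Ico (1/2:ℝ) 1 := by norm_num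
  have := hmono hmem0 hmem hz
  rw [h0] at this
  simp only [hf] at this
  linarith

theorem g_nonpos (z : ℝ) (hz : 1/2 ≤ z) (hz1 : z < 1) :
    2*z - 1 - 2*(1 - 3*z + 3*z^2) * Real.log (z/(1-z)) ≤ 0 := by
  have hz0 : (0:ℝ) < z := by linarith
  have h1z : (0:ℝ) < 1 - z := by linarith
  have hlog : Real.log (z/(1-z)) = Real.log z - Real.log (1-z) :=
    Real.log_div hz0.ne' h1z.ne'
  have hL : 4*z - 2 ≤ Real.log (z/(1-z)) := by
    rw [hlog]; exact g_key z hz hz1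
  have hq : (0:ℝ) < 1 - 3*z + 3*z^2 := by nlinarith [sq_nonneg (2*z-1)]
  nlinarith [mul_le_mul_of_nonneg_left hL hq.le, sq_nonneg (2*z-1),
    mul_nonneg (sub_nonneg.2 hz) (sq_nonneg (2*z-1))]
end

section
/- For all z in (1/2, 1), the function z ↦ z²(1-z)²·log(z/(1-z))/(2z-1) has nonpositive derivative; i.e., the ratio h'(z)/h'''(z) of first and third derivatives of the binary entropy function is nonincreasing on (1/2, 1). -/
open Real

lemma key_ineq {t : ℝ} (ht0 : 0 < t) (ht1 : t < 1) :
    2*t ≤ (1+3*t^2) * Real.log ((1+t)/(1-t)) := by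
  have hD : (0:ℝ) < 1 + 3*t^2 := by nlinarith
  set s : ℝ := 2*t/(1+3*t^2) with hs
  have hs0 : 0 < s := by positivity
  have hs1 : s ≤ 1 := by
    rw [hs, div_le_one hD]; nlinarith [sq_nonneg (t - 1/3)]
  have hexp : Real.exp s ≤ 1 + s + s^2/2 + 2/9*s^3 := by
    have h := Real.exp_bound' hs0.le hs1 (n := 3) (by norm_num)
    simp [Finset.sum_range_succ, Nat.factorial] at h
    nlinarith [h]
  have hpos : (0:ℝ) < (1+t)/(1-t) := by
    apply div_pos <;> linarith
  have hD3 : (0:ℝ) < (1+3*t^2)^3 := by positivity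
  have e1 : (s + s^2/2 + 2/9*s^3) * (1+3*t^2)^3
      = 2*t*(1+3*t^2)^2 + 2*t^2*(1+3*t^2) + 16/9*t^3 := by
    rw [hs]; field_simp; ring
  have poly : (1-t)*(2*t*(1+3*t^2)^2 + 2*t^2*(1+3*t^2) + 16/9*t^3) ≤ 2*t*(1+3*t^2)^3 := by
    nlinarith [sq_nonneg t, sq_nonneg (t*(1+3*t^2)), mul_pos ht0 hD, sq_nonneg (1+3*t^2),
      mul_pos (mul_pos ht0 ht0) hD, mul_pos (mul_pos (mul_pos ht0 ht0) ht0) (mul_pos hD hD)]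
  have h2 : (1-t)*(s + s^2/2 + 2/9*s^3) ≤ 2*t := by
    rw [← mul_le_mul_iff_of_pos_right hD3]
    calc (1-t)*(s + s^2/2 + 2/9*s^3) * (1+3*t^2)^3
        = (1-t)*((s + s^2/2 + 2/9*s^3) * (1+3*t^2)^3) := by ring
      _ = (1-t)*(2*t*(1+3*t^2)^2 + 2*t^2*(1+3*t^2) + 16/9*t^3) := by rw [e1]
      _ ≤ 2*t*(1+3*t^2)^3 := poly
      _ = 2*t*(1+3*t^2)^3 := rfl
  have hpoly : 1 + s + s^2/2 + 2/9*s^3 ≤ (1+t)/(1-t) := by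
    rw [le_div_iff₀ (by linarith : (0:ℝ) < 1 - t)]
    nlinarith [h2]
  have hlog : s ≤ Real.log ((1+t)/(1-t)) := by
    rw [Real.le_log_iff_exp_le hpos]
    exact hexp.trans hpoly
  have := mul_le_mul_of_nonneg_left hlog hD.le
  calc 2*t = (1+3*t^2) * s := by rw [hs]; field_simp
    _ ≤ _ := this

theorem ratio_deriv_nonpos (z : ℝ) (hz : 1/2 < z) (hz1 : z < 1) :
    deriv (fun x : ℝ => x^2 * (1-x)^2 * Real.log (x/(1-x)) / (2*x - 1)) z ≤ 0 := by
  have hz0 : 0 < z := by linarith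
  have h1z : 0 < 1 - z := by linarith
  have hd : 0 < 2*z - 1 := by linarith
  set L := Real.log (z/(1-z)) with hL
  have hinner : HasDerivAt (fun x : ℝ => x/(1-x)) (((1-z) - z*(-1))/(1-z)^2) z := by
    have h1 : HasDerivAt (fun x : ℝ => x) 1 z := hasDerivAt_id z
    have h2 : HasDerivAt (fun x : ℝ => 1 - x) (-1) z := by
      simpa using h1.const_sub (1:ℝ)
    have : HasDerivAt (fun x : ℝ => x/(1-x)) _ z := h1.div h2 (by linarith)
    convert this using 1
    ring
  have hlog : HasDerivAt (fun x : ℝ => Real.log (x/(1-x))) (1/(z*(1-z))) z := by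
    have := hinner.log (by positivity)
    convert this using 1
    have h1 : z ≠ 0 := ne_of_gt hz0
    have h2 : (1:ℝ)-z ≠ 0 := ne_of_gt h1z
    field_simp
    ring
  have hpoly : HasDerivAt (fun x : ℝ => x^2 * (1-x)^2) (2*z*(1-z)^2 - 2*z^2*(1-z)) z := by
    have h1 : HasDerivAt (fun x : ℝ => x^2) (2*z) z := by
      simpa using (hasDerivAt_pow 2 z)
    have h3 : HasDerivAt (fun x : ℝ => 1 - x) (-1) z := by
      simpa using (hasDerivAt_id z).const_sub (1:ℝ)
    have h2 : HasDerivAt (fun x : ℝ => (1-x)^2) (-(2*(1-z))) z := by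
      have : HasDerivAt (fun x : ℝ => (1-x)^2) _ z := h3.pow 2
      convert this using 1; ring
    have h4 : HasDerivAt (fun x : ℝ => x^2 * (1-x)^2) _ z := h1.mul h2
    convert h4 using 1; ring
  have hnum : HasDerivAt (fun x : ℝ => x^2 * (1-x)^2 * Real.log (x/(1-x)))
      ((2*z*(1-z)^2 - 2*z^2*(1-z)) * L + z^2*(1-z)^2 * (1/(z*(1-z)))) z :=
    hpoly.mul hlog
  have hden : HasDerivAt (fun x : ℝ => 2*x - 1) 2 z := by
    simpa using ((hasDerivAt_id z).const_mul 2).sub_const 1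
  have hf : HasDerivAt (fun x : ℝ => x^2 * (1-x)^2 * Real.log (x/(1-x)) / (2*x - 1)) _ z :=
    hnum.div hden (by linarith)
  rw [hf.deriv]
  apply div_nonpos_of_nonpos_of_nonneg _ (by positivity)
  have hfrac : (1+(2*z-1))/(1-(2*z-1)) = z/(1-z) := by
    rw [show (1+(2*z-1)) = 2*z by ring, show (1-(2*z-1)) = 2*(1-z) by ring,
      mul_div_mul_left _ _ (by norm_num : (2:ℝ) ≠ 0)]
  have hkey : 2*(2*z-1) ≤ (1+3*(2*z-1)^2) * L := by
    have := key_ineq (t := 2*z-1) (by linarith) (by linarith)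
    rwa [hfrac] at this
  have hsimp : z^2*(1-z)^2 * (1/(z*(1-z))) = z*(1-z) := by
    field_simp
  rw [hsimp]
  nlinarith [mul_le_mul_of_nonneg_left hkey (mul_pos hz0 h1z).le]
end

section
/- For all q in (1/2, 1) and all z in [1/2, q], the function f(x) = -h'''(q)·h(x) + h'(q)·h''(x) has nonpositive derivative at every point of [1/2, q]; consequently f(z) ≥ f(q). -/
open Real

noncomputable def h (x : ℝ) : ℝ := -x * Real.log x - (1-x) * Real.log (1-x)

/-- derivative of log t - log (1-t) -/
lemma hasDerivAt_u {x : ℝ} (h0 : 0 < x) (h1 : x < 1) :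
    HasDerivAt (fun t : ℝ => Real.log t - Real.log (1-t)) (1/x + 1/(1-x)) x := by
  have h1x : (0:ℝ) < 1 - x := by linarith
  have l1 : HasDerivAt Real.log x⁻¹ x := Real.hasDerivAt_log h0.ne'
  have l2 : HasDerivAt (fun t : ℝ => Real.log (1-t)) ((1-x)⁻¹ * (-1)) x := by
    have hlin : HasDerivAt (fun t : ℝ => 1 - t) (-1) x := by
      simpa using (hasDerivAt_id x).const_sub 1
    exact (Real.hasDerivAt_log h1x.ne').comp x hlin
  have := l1.sub l2
  refine this.congr_deriv ?_
  field_simp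
  ring

lemma log_lower {t : ℝ} (h1 : 1/2 ≤ t) (h2 : t < 1) :
    2*(2*t-1) ≤ Real.log t - Real.log (1-t) := by
  set g : ℝ → ℝ := fun t => (Real.log t - Real.log (1-t)) - (4*t - 2) with hg
  have hd : ∀ x ∈ Set.Ioo (0 : ℝ) 1, HasDerivAt g (1/x + 1/(1-x) - 4) x := by
    intro x hx
    have hlin : HasDerivAt (fun t : ℝ => 4*t - 2) 4 x := by
      simpa using ((hasDerivAt_id x).const_mul 4).sub_const 2
    exact (hasDerivAt_u hx.1 hx.2).sub hlin
  have hmono : MonotoneOn g (Set.Ico (1/2 : ℝ) 1) := by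
    apply monotoneOn_of_deriv_nonneg (convex_Ico _ _)
    · intro x hx
      rcases hx with ⟨a, b⟩
      exact (hd x ⟨by linarith, b⟩).continuousAt.continuousWithinAt
    · intro x hx
      rw [interior_Ico] at hx
      exact (hd x ⟨by linarith [hx.1], hx.2⟩).differentiableAt.differentiableWithinAt
    · intro x hx
      rw [interior_Ico] at hx
      rcases hx with ⟨a, b⟩
      have h0 : (0:ℝ) < x := by linarith
      have h1x : (0:ℝ) < 1 - x := by linarith
      rw [(hd x ⟨h0, b⟩).deriv]
      rw [div_add_div _ _ h0.ne' h1x.ne', sub_nonneg, le_div_iff₀ (by positivity)]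
      nlinarith [sq_nonneg (2*x-1)]
  have := hmono (Set.mem_Ico.2 ⟨le_refl _, by linarith⟩) (Set.mem_Ico.2 ⟨h1, h2⟩) h1
  have hhalf : g (1/2) = 0 := by norm_num [hg]
  rw [hhalf] at this
  simp only [hg] at this
  linarith

/-- W is the key auxiliary function -/
noncomputable def W (t : ℝ) : ℝ :=
  (Real.log t - Real.log (1-t)) * ((t*(1-t))^2 / (2*t-1))

lemma hasDerivAt_W {x : ℝ} (h0 : 1/2 < x) (h1 : x < 1) :
    HasDerivAt W ((1/x + 1/(1-x)) * ((x*(1-x))^2 / (2*x-1))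
      + (Real.log x - Real.log (1-x)) *
        ((2*(x*(1-x))*(1-2*x)*(2*x-1) - (x*(1-x))^2*2) / (2*x-1)^2)) x := by
  have hx0 : (0:ℝ) < x := by linarith
  have hden : (2*x-1) ≠ 0 := by linarith
  have hn : HasDerivAt (fun t : ℝ => (t*(1-t))^2) (2*(x*(1-x))*(1-2*x)) x := by
    have hg : HasDerivAt (fun t : ℝ => t*(1-t)) (1-2*x) x := by
      have := (hasDerivAt_id x).mul ((hasDerivAt_id x).const_sub 1)
      refine this.congr_deriv ?_; simp [id]; ring
    have := hg.pow 2
    refine this.congr_deriv ?_; ring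
  have hp : HasDerivAt (fun t : ℝ => (t*(1-t))^2 / (2*t-1))
      ((2*(x*(1-x))*(1-2*x)*(2*x-1) - (x*(1-x))^2*2) / (2*x-1)^2) x := by
    have hd2 : HasDerivAt (fun t : ℝ => 2*t-1) 2 x := by
      simpa using ((hasDerivAt_id x).const_mul 2).sub_const 1
    exact hn.div hd2 hden
  exact (hasDerivAt_u hx0 h1).mul hp

lemma W_deriv_nonpos {x : ℝ} (a : 1/2 < x) (b : x < 1) :
    (1/x + 1/(1-x)) * ((x*(1-x))^2 / (2*x-1))
      + (Real.log x - Real.log (1-x)) *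
        ((2*(x*(1-x))*(1-2*x)*(2*x-1) - (x*(1-x))^2*2) / (2*x-1)^2) ≤ 0 := by
  have hx0 : (0:ℝ) < x := by linarith
  have h1x : (0:ℝ) < 1 - x := by linarith
  have hdpos : (0:ℝ) < 2*x-1 := by linarith
  have hu := log_lower (t := x) (by linarith) b
  set u := Real.log x - Real.log (1-x) with hu'
  have hrw : (1/x + 1/(1-x)) * ((x*(1-x))^2 / (2*x-1))
      + u * ((2*(x*(1-x))*(1-2*x)*(2*x-1) - (x*(1-x))^2*2) / (2*x-1)^2)
      = ((x*(1-x)) * ((2*x-1) - 2*(3*x^2-3*x+1)*u)) / (2*x-1)^2 := by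
    field_simp
    ring
  rw [hrw]
  apply div_nonpos_of_nonpos_of_nonneg _ (by positivity)
  apply mul_nonpos_of_nonneg_of_nonpos (by positivity)
  nlinarith [sq_nonneg (2*x-1)]

lemma W_antitone : AntitoneOn W (Set.Ioo (1/2 : ℝ) 1) := by
  apply antitoneOn_of_deriv_nonpos (convex_Ioo _ _)
  · intro x hx
    exact (hasDerivAt_W hx.1 hx.2).continuousAt.continuousWithinAt
  · intro x hx
    rw [interior_Ioo] at hx
    exact (hasDerivAt_W hx.1 hx.2).differentiableAt.differentiableWithinAt
  · intro x hx
    rw [interior_Ioo] at hx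
    rw [(hasDerivAt_W hx.1 hx.2).deriv]
    exact W_deriv_nonpos hx.1 hx.2

lemma key_ineq_s3 {q x : ℝ} (hq : 1/2 < q) (hq1 : q < 1) (hx : 1/2 ≤ x) (hxq : x ≤ q) :
    (Real.log q - Real.log (1-q)) * (2*x-1) * (q*(1-q))^2
      ≤ (2*q-1) * (Real.log x - Real.log (1-x)) * (x*(1-x))^2 := by
  rcases eq_or_lt_of_le hx with heq | hlt
  · rw [← heq]; norm_num
  · have hW := W_antitone (Set.mem_Ioo.2 ⟨hlt, by linarith⟩)
      (Set.mem_Ioo.2 ⟨by linarith, hq1⟩) hxq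
    unfold W at hW
    rw [← mul_div_assoc, ← mul_div_assoc,
      div_le_div_iff₀ (by linarith) (by linarith)] at hW
    nlinarith [hW]

lemma hasDerivAt_h {x : ℝ} (h0 : 0 < x) (h1 : x < 1) :
    HasDerivAt h (Real.log (1-x) - Real.log x) x := by
  have h1x : (0:ℝ) < 1 - x := by linarith
  have l1 : HasDerivAt (fun t : ℝ => t * Real.log t) (Real.log x + 1) x :=
    Real.hasDerivAt_mul_log h0.ne'
  have l2 : HasDerivAt (fun t : ℝ => (1-t) * Real.log (1-t))
      ((Real.log (1-x) + 1) * (-1)) x := by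
    have hlin : HasDerivAt (fun t : ℝ => 1 - t) (-1) x := by
      simpa using (hasDerivAt_id x).const_sub 1
    exact (Real.hasDerivAt_mul_log h1x.ne').comp x hlin
  have := (l1.neg).sub l2
  refine (this.congr_deriv ?_).congr_of_eventuallyEq (Filter.Eventually.of_forall fun t => ?_)
  · ring
  · unfold h; simp only [Pi.sub_apply, Pi.neg_apply]; ring

lemma hasDerivAt_p {x : ℝ} (h0 : 0 < x) (h1 : x < 1) :
    HasDerivAt (fun t : ℝ => -(1/(t*(1-t)))) ((1-2*x)/(x*(1-x))^2) x := by
  have h1x : (0:ℝ) < 1 - x := by linarith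
  have hg : HasDerivAt (fun t : ℝ => t*(1-t)) (1-2*x) x := by
    have := (hasDerivAt_id x).mul ((hasDerivAt_id x).const_sub 1)
    refine this.congr_deriv ?_; simp [id]; ring
  have hne : x*(1-x) ≠ 0 := by positivity
  have := ((hasDerivAt_const x (1:ℝ)).div hg hne).neg
  refine this.congr_deriv ?_
  field_simp
  ring

lemma hasDerivAt_f (q : ℝ) {x : ℝ} (h0 : 0 < x) (h1 : x < 1) :
    HasDerivAt (fun t : ℝ => -(-(2*q-1)/(q^2*(1-q)^2)) * h t
          + (-Real.log (q/(1-q))) * (-(1/(t*(1-t)))))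
      (-(-(2*q-1)/(q^2*(1-q)^2)) * (Real.log (1-x) - Real.log x)
          + (-Real.log (q/(1-q))) * ((1-2*x)/(x*(1-x))^2)) x :=
  ((hasDerivAt_h h0 h1).const_mul _).add ((hasDerivAt_p h0 h1).const_mul _)

lemma deriv_f_nonpos {q x : ℝ} (hq : 1/2 < q) (hq1 : q < 1)
    (h0 : 1/2 ≤ x) (h1 : x ≤ q) :
    -(-(2*q-1)/(q^2*(1-q)^2)) * (Real.log (1-x) - Real.log x)
          + (-Real.log (q/(1-q))) * ((1-2*x)/(x*(1-x))^2) ≤ 0 := by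
  have hx0 : (0:ℝ) < x := by linarith
  have hx1 : x < 1 := by linarith
  have h1x : (0:ℝ) < 1 - x := by linarith
  have h1q : (0:ℝ) < 1 - q := by linarith
  have hq0 : (0:ℝ) < q := by linarith
  have hlog : Real.log (q/(1-q)) = Real.log q - Real.log (1-q) :=
    Real.log_div hq0.ne' h1q.ne'
  have key := key_ineq_s3 hq hq1 h0 h1
  have hrw : -(-(2*q-1)/(q^2*(1-q)^2)) * (Real.log (1-x) - Real.log x)
          + (-Real.log (q/(1-q))) * ((1-2*x)/(x*(1-x))^2)
      = ((Real.log q - Real.log (1-q)) * (2*x-1) * (q*(1-q))^2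
          - (2*q-1) * (Real.log x - Real.log (1-x)) * (x*(1-x))^2)
        / ((q*(1-q))^2 * (x*(1-x))^2) := by
    rw [hlog]
    field_simp
    ring
  rw [hrw]
  apply div_nonpos_of_nonpos_of_nonneg (by linarith) (by positivity)

theorem f_deriv_nonpos (q : ℝ) (hq : 1/2 < q) (hq1 : q < 1) (z : ℝ)
    (hz : 1/2 ≤ z) (hzq : z ≤ q) :
    (∀ x ∈ Set.Icc (1/2 : ℝ) q,
      deriv (fun t : ℝ => -(-(2*q-1)/(q^2*(1-q)^2)) * h t
          + (-Real.log (q/(1-q))) * (-(1/(t*(1-t))))) x ≤ 0) ∧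
    (-(-(2*q-1)/(q^2*(1-q)^2)) * h z + (-Real.log (q/(1-q))) * (-(1/(z*(1-z))))
      ≥ -(-(2*q-1)/(q^2*(1-q)^2)) * h q + (-Real.log (q/(1-q))) * (-(1/(q*(1-q))))) := by
  have part1 : ∀ x ∈ Set.Icc (1/2 : ℝ) q,
      deriv (fun t : ℝ => -(-(2*q-1)/(q^2*(1-q)^2)) * h t
          + (-Real.log (q/(1-q))) * (-(1/(t*(1-t))))) x ≤ 0 := by
    intro x hx
    rcases hx with ⟨a, b⟩
    have hx0 : (0:ℝ) < x := by linarith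
    have hx1 : x < 1 := by linarith
    rw [(hasDerivAt_f q hx0 hx1).deriv]
    exact deriv_f_nonpos hq hq1 a b
  refine ⟨part1, ?_⟩
  have hanti : AntitoneOn (fun t : ℝ => -(-(2*q-1)/(q^2*(1-q)^2)) * h t
          + (-Real.log (q/(1-q))) * (-(1/(t*(1-t))))) (Set.Icc (1/2) q) := by
    apply antitoneOn_of_deriv_nonpos (convex_Icc _ _)
    · intro x hx
      rcases hx with ⟨a, b⟩
      exact (hasDerivAt_f q (by linarith) (by linarith)).continuousAt.continuousWithinAt
    · intro x hx
      rw [interior_Icc] at hx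
      exact (hasDerivAt_f q (by linarith [hx.1]) (by linarith [hx.2])).differentiableAt.differentiableWithinAt
    · intro x hx
      rw [interior_Icc] at hx
      exact part1 x ⟨le_of_lt hx.1, le_of_lt hx.2⟩
  exact hanti (Set.mem_Icc.2 ⟨hz, hzq⟩) (Set.mem_Icc.2 ⟨by linarith, le_refl q⟩) hzq
end

section
/- For all q in [1/2, 1), all θ in [0,1], with z = qθ + (1-q)(1-θ): the inequality θ(1-θ)(2q-1)(1-q)/(z(1-z)) ≤ (h(z) - h(q))/(q·log(q/(1-q))) holds (interpreting both sides as 0 when q = 1/2), where h is the binary entropy function. -/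
open Real Set

lemma hd_log1sub {t : ℝ} (ht : t < 1) :
    HasDerivAt (fun t : ℝ => Real.log (1-t)) (-(1-t)⁻¹) t := by
  have h : HasDerivAt (fun t : ℝ => 1 - t) (-1) t := (hasDerivAt_id t).const_sub 1
  have := (Real.hasDerivAt_log (by linarith : (1:ℝ) - t ≠ 0)).comp t h
  simpa [mul_comm, Function.comp_def] using this

lemma logit_lower {x : ℝ} (hx : 1/2 ≤ x) (hx1 : x < 1) :
    4*x - 2 ≤ Real.log x - Real.log (1-x) := by
  set f : ℝ → ℝ := fun t => Real.log t - Real.log (1-t) - (4*t - 2) with hf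
  have hmono : MonotoneOn f (Set.Ico (1/2 : ℝ) 1) := by
    apply monotoneOn_of_hasDerivWithinAt_nonneg (convex_Ico _ _)
      (f' := fun t => t⁻¹ + (1-t)⁻¹ - 4)
    · apply ContinuousOn.sub (ContinuousOn.sub ?_ ?_) (by fun_prop)
      · exact ContinuousOn.log (continuousOn_id) (fun t ht => by
          simp only [Set.mem_Ico] at ht; intro h; rw [h] at ht; norm_num at ht)
      · exact ContinuousOn.log (by fun_prop) (fun t ht => by
          simp only [Set.mem_Ico] at ht; intro h; have : t = 1 := by linarith
          rw [this] at ht; norm_num at ht)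
    · intro t ht
      rw [interior_Ico] at ht
      obtain ⟨h1, h2⟩ := ht
      have ht0 : t ≠ 0 := by intro h; rw [h] at h1; linarith
      have d1 : HasDerivAt f (t⁻¹ + (1-t)⁻¹ - 4) t := by
        have := ((Real.hasDerivAt_log ht0).sub (hd_log1sub h2)).sub
          ((hasDerivAt_id t).const_mul 4 |>.sub_const 2)
        simpa [hf, Pi.sub_def] using this.congr_deriv (by ring)
      exact d1.hasDerivWithinAt
    · intro t ht
      rw [interior_Ico] at ht
      obtain ⟨h1, h2⟩ := ht
      have ht0 : (0:ℝ) < t := by linarith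
      have ht1 : (0:ℝ) < 1 - t := by linarith
      rw [sub_nonneg, inv_eq_one_div, inv_eq_one_div,
        div_add_div _ _ (ne_of_gt ht0) (ne_of_gt ht1), le_div_iff₀ (by positivity)]
      nlinarith [sq_nonneg (2*t-1)]
  have h0 : f (1/2) = 0 := by norm_num [hf]
  have := hmono (Set.mem_Ico.2 ⟨le_refl _, by linarith⟩) (Set.mem_Ico.2 ⟨hx, hx1⟩) hx
  rw [h0] at this
  simp only [hf] at this
  linarith

lemma phi_deriv {x : ℝ} (h1 : 1/2 < x) (h2 : x < 1) :
    HasDerivAt (fun x : ℝ => (x*(1-x))^2 * (Real.log x - Real.log (1-x)) / (2*x-1))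
      ((x*(1-x)) * ((2*x-1) - (Real.log x - Real.log (1-x))*(2*(2*x-1)^2 + 2*(x*(1-x))))
        / (2*x-1)^2) x := by
  have hx0 : (0:ℝ) < x := by linarith
  have hx1 : (0:ℝ) < 1 - x := by linarith
  have hv : (2*x-1) ≠ 0 := by intro h; nlinarith
  have hP : HasDerivAt (fun x : ℝ => (x*(1-x))^2) (2*(x*(1-x))*(1-2*x)) x := by
    have hb : HasDerivAt (fun x : ℝ => x*(1-x)) (1-2*x) x := by
      have := (hasDerivAt_id x).mul ((hasDerivAt_id x).const_sub 1)
      simp only [id_eq] at this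
      exact this.congr_deriv (by ring)
    simpa [Pi.pow_def] using (hb.pow 2).congr_deriv (by ring)
  have hQ : HasDerivAt (fun x : ℝ => Real.log x - Real.log (1-x)) (x⁻¹ + (1-x)⁻¹) x := by
    have := (Real.hasDerivAt_log (ne_of_gt hx0)).sub (hd_log1sub h2)
    simpa [Pi.sub_def] using this.congr_deriv (by ring)
  have hN : HasDerivAt (fun x : ℝ => (x*(1-x))^2 * (Real.log x - Real.log (1-x)))
      (2*(x*(1-x))*(1-2*x) * (Real.log x - Real.log (1-x)) + (x*(1-x))^2 * (x⁻¹+(1-x)⁻¹)) x :=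
    hP.mul hQ
  have hD : HasDerivAt (fun x : ℝ => 2*x-1) 2 x := by
    simpa using ((hasDerivAt_id x).const_mul 2).sub_const 1
  have := hN.div hD hv
  apply this.congr_deriv
  field_simp
  ring

lemma cross {z q : ℝ} (hz : 1/2 < z) (hq1 : q < 1) (hzq : z ≤ q) :
    (q*(1-q))^2 * (Real.log q - Real.log (1-q)) * (2*z-1)
      ≤ (z*(1-z))^2 * (Real.log z - Real.log (1-z)) * (2*q-1) := by
  set Φ : ℝ → ℝ := fun x => (x*(1-x))^2 * (Real.log x - Real.log (1-x)) / (2*x-1) with hΦ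
  have hanti : AntitoneOn Φ (Set.Icc z q) := by
    apply antitoneOn_of_hasDerivWithinAt_nonpos (convex_Icc _ _)
      (f' := fun x => (x*(1-x)) * ((2*x-1) - (Real.log x - Real.log (1-x))*(2*(2*x-1)^2 + 2*(x*(1-x)))) / (2*x-1)^2)
    · intro x hx
      obtain ⟨ha, hb⟩ := hx
      have h1 : 1/2 < x := lt_of_lt_of_le hz ha
      have h2 : x < 1 := lt_of_le_of_lt hb hq1
      exact ((phi_deriv h1 h2).continuousAt).continuousWithinAt
    · intro x hx
      rw [interior_Icc] at hx
      exact (phi_deriv (lt_of_lt_of_le hz (le_of_lt hx.1)) (lt_trans hx.2 hq1)).hasDerivWithinAt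
    · intro x hx
      rw [interior_Icc] at hx
      have h1 : 1/2 < x := lt_of_lt_of_le hz (le_of_lt hx.1)
      have h2 : x < 1 := lt_trans hx.2 hq1
      have hw : (0:ℝ) < x*(1-x) := by nlinarith
      have hv : (0:ℝ) < 2*x-1 := by linarith
      have hL : 2*(2*x-1) ≤ Real.log x - Real.log (1-x) := by
        have := logit_lower (le_of_lt h1) h2; linarith
      apply div_nonpos_of_nonpos_of_nonneg _ (by positivity)
      have key : (2*x-1) ≤ (Real.log x - Real.log (1-x))*(2*(2*x-1)^2 + 2*(x*(1-x))) := by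
        nlinarith [mul_le_mul_of_nonneg_right hL (by nlinarith : (0:ℝ) ≤ 2*(2*x-1)^2 + 2*(x*(1-x)))]
      nlinarith
  have := hanti (Set.mem_Icc.2 ⟨le_refl _, hzq⟩) (Set.mem_Icc.2 ⟨hzq, le_refl _⟩) hzq
  simp only [hΦ] at this
  have hvz : (0:ℝ) < 2*z-1 := by linarith
  have hvq : (0:ℝ) < 2*q-1 := by linarith
  rw [div_le_div_iff₀ hvq hvz] at this
  linarith

lemma psi_deriv (c : ℝ) {x : ℝ} (h0 : 0 < x) (h1 : x < 1) :
    HasDerivAt (fun x => h x + c / (x*(1-x)))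
      ((Real.log (1-x) - Real.log x) + c*(2*x-1)/(x*(1-x))^2) x := by
  have hw : (0:ℝ) < x*(1-x) := by nlinarith
  have h1x : (1:ℝ) - x ≠ 0 := by linarith
  have hx0 : x ≠ 0 := ne_of_gt h0
  have hb : HasDerivAt (fun x : ℝ => x*(1-x)) (1-2*x) x := by
    have := (hasDerivAt_id x).mul ((hasDerivAt_id x).const_sub 1)
    simp only [id_eq] at this
    exact this.congr_deriv (by ring)
  have hA : HasDerivAt (fun x : ℝ => -x * Real.log x) (-Real.log x - 1) x := by
    have := ((hasDerivAt_id x).neg).mul (Real.hasDerivAt_log (ne_of_gt h0))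
    simp only [Pi.neg_apply, id_eq] at this
    exact this.congr_deriv (by field_simp; ring)
  have hB : HasDerivAt (fun x : ℝ => (1-x) * Real.log (1-x)) (-Real.log (1-x) - 1) x := by
    have := ((hasDerivAt_id x).const_sub 1).mul (hd_log1sub h1)
    simp only [id_eq] at this
    exact this.congr_deriv (by field_simp; ring)
  have hC : HasDerivAt (fun x : ℝ => c / (x*(1-x))) (c*(2*x-1)/(x*(1-x))^2) x := by
    have := (hasDerivAt_const x c).div hb (ne_of_gt hw)
    exact this.congr_deriv (by field_simp; ring)
  have := (hA.sub hB).add hC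
  exact this.congr_deriv (by ring)

lemma key {q z : ℝ} (hq : 1/2 < q) (hq1 : q < 1) (hz : 1/2 ≤ z) (hzq : z ≤ q) :
    q*(1-q)*(Real.log q - Real.log (1-q)) * (z*(1-z) - q*(1-q))
      ≤ (2*q-1) * (z*(1-z)) * (h z - h q) := by
  have h2q : (0:ℝ) < 2*q-1 := by linarith
  have hq0 : (0:ℝ) < q := by linarith
  have hwq : (0:ℝ) < q*(1-q) := by nlinarith
  set c : ℝ := (q*(1-q))^2 * (Real.log q - Real.log (1-q)) / (2*q-1) with hc
  set ψ : ℝ → ℝ := fun x => h x + c / (x*(1-x)) with hψ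
  have hanti : AntitoneOn ψ (Set.Icc (1/2) q) := by
    apply antitoneOn_of_hasDerivWithinAt_nonpos (convex_Icc _ _)
      (f' := fun x => (Real.log (1-x) - Real.log x) + c*(2*x-1)/(x*(1-x))^2)
    · intro x hx
      obtain ⟨ha, hb⟩ := hx
      have h0 : (0:ℝ) < x := by linarith
      have h1 : x < 1 := lt_of_le_of_lt hb hq1
      exact ((psi_deriv c h0 h1).continuousAt).continuousWithinAt
    · intro x hx
      rw [interior_Icc] at hx
      have h0 : (0:ℝ) < x := by linarith [hx.1]
      exact (psi_deriv c h0 (lt_trans hx.2 hq1)).hasDerivWithinAt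
    · intro x hx
      rw [interior_Icc] at hx
      obtain ⟨ha, hb⟩ := hx
      have h1 : x < 1 := lt_trans hb hq1
      have hw : (0:ℝ) < x*(1-x) := by nlinarith
      have hcross := cross ha hq1 (le_of_lt hb)
      have step : c*(2*x-1)/(x*(1-x))^2 ≤ Real.log x - Real.log (1-x) := by
        rw [div_le_iff₀ (by positivity), hc, div_mul_eq_mul_div, div_le_iff₀ h2q]
        linarith
      linarith
  have hmem1 : z ∈ Set.Icc (1/2:ℝ) q := Set.mem_Icc.2 ⟨hz, hzq⟩
  have hmem2 : q ∈ Set.Icc (1/2:ℝ) q := Set.mem_Icc.2 ⟨le_of_lt hq, le_refl _⟩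
  have hineq := hanti hmem1 hmem2 hzq
  simp only [hψ] at hineq
  -- ψ q ≤ ψ z : h q + c/(q(1-q)) ≤ h z + c/(z(1-z))
  have hwz : (0:ℝ) < z*(1-z) := by nlinarith
  have expand : c / (q*(1-q)) - c / (z*(1-z))
      = q*(1-q)*(Real.log q - Real.log (1-q)) * (z*(1-z) - q*(1-q)) / ((2*q-1) * (z*(1-z))) := by
    rw [hc]; simp only [div_div]
    rw [div_sub_div _ _ (mul_pos h2q hwq).ne' (mul_pos h2q hwz).ne', div_eq_div_iff (by positivity) (mul_pos h2q hwz).ne']; ring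
  have : q*(1-q)*(Real.log q - Real.log (1-q)) * (z*(1-z) - q*(1-q)) / ((2*q-1) * (z*(1-z)))
      ≤ h z - h q := by rw [← expand]; linarith
  rw [div_le_iff₀ (by positivity)] at this
  linarith

lemma h_symm (x : ℝ) : h (1-x) = h x := by
  simp only [h, sub_sub_cancel]; ring

lemma key' {q z : ℝ} (hq : 1/2 < q) (hq1 : q < 1) (hz1 : 1-q ≤ z) (hz2 : z ≤ q) :
    q*(1-q)*(Real.log q - Real.log (1-q)) * (z*(1-z) - q*(1-q))
      ≤ (2*q-1) * (z*(1-z)) * (h z - h q) := by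
  rcases le_or_gt (1/2 : ℝ) z with hc | hc
  · exact key hq hq1 hc hz2
  · have h1 : (1:ℝ)/2 ≤ 1-z := by linarith
    have h2 : 1-z ≤ q := by linarith
    have := key hq hq1 h1 h2
    have e1 : (1-z)*(1-(1-z)) = z*(1-z) := by ring
    rw [e1, h_symm] at this
    exact this

theorem main_ineq (q θ : ℝ) (hq : 1/2 ≤ q) (hq1 : q < 1)
    (hθ0 : 0 ≤ θ) (hθ1 : θ ≤ 1) :
    θ*(1-θ)*(2*q-1)*(1-q) / ((q*θ + (1-q)*(1-θ)) * (1 - (q*θ + (1-q)*(1-θ))))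
      ≤ (h (q*θ + (1-q)*(1-θ)) - h q) / (q * Real.log (q/(1-q))) := by
  rcases eq_or_lt_of_le hq with hq2 | hq2
  · have hd : q * Real.log (q/(1-q)) = 0 := by
      rw [← hq2]; norm_num
    have hn : θ*(1-θ)*(2*q-1)*(1-q) = 0 := by rw [← hq2]; ring
    rw [hd, div_zero, hn, zero_div]
  · set z : ℝ := q*θ + (1-q)*(1-θ) with hz
    have h2q : (0:ℝ) < 2*q-1 := by linarith
    have hq0 : (0:ℝ) < q := by linarith
    have h1q : (0:ℝ) < 1-q := by linarith
    have hz1 : 1-q ≤ z := by rw [hz]; nlinarith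
    have hz2 : z ≤ q := by rw [hz]; nlinarith
    have hz0 : (0:ℝ) < z := lt_of_lt_of_le h1q hz1
    have hz3 : z < 1 := lt_of_le_of_lt hz2 hq1
    have hwz : (0:ℝ) < z*(1-z) := by nlinarith
    have hL : (0:ℝ) < Real.log (q/(1-q)) :=
      Real.log_pos ((one_lt_div h1q).2 (by linarith))
    rw [div_le_div_iff₀ hwz (by positivity)]
    rw [Real.log_div (ne_of_gt hq0) (ne_of_gt h1q)]
    have hkey := key' hq2 hq1 hz1 hz2
    have e0 : z*(1-z) - q*(1-q) = (2*q-1)^2*(θ*(1-θ)) := by rw [hz]; ring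
    rw [e0] at hkey
    have e1 : q*(1-q)*(Real.log q - Real.log (1-q)) * ((2*q-1)^2*(θ*(1-θ)))
        = (2*q-1) * (θ*(1-θ)*(2*q-1)*(1-q) * (q * (Real.log q - Real.log (1-q)))) := by ring
    have e2 : (2*q-1) * (z*(1-z)) * (h z - h q)
        = (2*q-1) * ((h z - h q) * (z*(1-z))) := by ring
    rw [e1, e2] at hkey
    exact le_of_mul_le_mul_left hkey h2q
end

section
/- In the Glosten-Milgrom model, the expected one-step payoff of the informed trader equals (1-ν)/2 times the bid-ask spread: ν·(b(1-θ) + (1-a)θ) = ((1-ν)/2)·(a - b), where b = (1-ν)θ/((1-ν)θ + (1+ν)(1-θ)) and a = (1+ν)θ/((1+ν)θ + (1-ν)(1-θ)), for ν ∈ (0,1) and θ ∈ (0,1). -/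
theorem payoff_eq_half_spread (ν θ : ℝ) (hν : 0 < ν) (hν1 : ν < 1)
    (hθ0 : 0 < θ) (hθ1 : θ < 1) :
    ν * (((1-ν)*θ/((1-ν)*θ + (1+ν)*(1-θ))) * (1-θ)
        + (1 - (1+ν)*θ/((1+ν)*θ + (1-ν)*(1-θ))) * θ)
    = ((1-ν)/2) * ((1+ν)*θ/((1+ν)*θ + (1-ν)*(1-θ))
        - (1-ν)*θ/((1-ν)*θ + (1+ν)*(1-θ))) := by
  have h1 : (1-ν)*θ + (1+ν)*(1-θ) > 0 := by nlinarith
  have h2 : (1+ν)*θ + (1-ν)*(1-θ) > 0 := by nlinarith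
  have h3 : θ*(1+ν) + (1-ν)*(1-θ) ≠ 0 := by nlinarith
  field_simp
  ring
end
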